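/- For every permutation w of the positive integers with only finitely many non-fixed points, the top pipe dream T_w = {(i,j) : 1 ≤ i ≤ code(w^{-1})_j} is a pipe dream of w. -/

import Mathlib

/-- The simple transposition corresponding to the cell `(i, j)`, namely
`s_{i+j-1}`, swapping `i+j-1` and `i+j` (as a permutation of the positive integers). -/
def cellTrans (p : ℕ+ × ℕ+) : Equiv.Perm ℕ+ :=
  Equiv.swap (p.1 + p.2 - 1) (p.1 + p.2)

/-- Key used to order cells: rows increasing, and within a row, columns decreasing. -/
def cellKey (p : ℕ+ × ℕ+) : Lex (ℕ+ × ℕ+ᵒᵈ) :=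
  toLex (p.1, OrderDual.toDual p.2)

/-- The product of the simple transpositions `s_{i+j-1}` over the cells `(i,j)` of `D`,
taken with `i` increasing and, for fixed `i`, `j` decreasing. -/
def pdWord (D : Finset (ℕ+ × ℕ+)) : Equiv.Perm ℕ+ :=
  (((D.image cellKey).sort (· ≤ ·)).map
    (fun q => cellTrans ((ofLex q).1, OrderDual.ofDual (ofLex q).2))).prod

/-- The number of inversions of a permutation of the positive integers. -/
noncomputable def invNum (w : Equiv.Perm ℕ+) : ℕ :=
  Set.ncard {p : ℕ+ × ℕ+ | p.1 < p.2 ∧ w p.2 < w p.1}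

/-- `D` is a pipe dream (RC-graph) of `w`. -/
def IsPipeDream (w : Equiv.Perm ℕ+) (D : Finset (ℕ+ × ℕ+)) : Prop :=
  D.card = invNum w ∧ pdWord D = w

/-- The number of pipe dreams of `w`. -/
noncomputable def nu (w : Equiv.Perm ℕ+) : ℕ :=
  Set.ncard {D : Finset (ℕ+ × ℕ+) | IsPipeDream w D}

/-- The number of occurrences of the pattern 132 in `w`. -/
noncomputable def p132 (w : Equiv.Perm ℕ+) : ℕ :=
  Set.ncard {t : ℕ+ × ℕ+ × ℕ+ |
    t.1 < t.2.1 ∧ t.2.1 < t.2.2 ∧ w t.1 < w t.2.2 ∧ w t.2.2 < w t.2.1}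

/-- The number of occurrences of the pattern 1432 in `w`. -/
noncomputable def p1432 (w : Equiv.Perm ℕ+) : ℕ :=
  Set.ncard {t : ℕ+ × ℕ+ × ℕ+ × ℕ+ |
    t.1 < t.2.1 ∧ t.2.1 < t.2.2.1 ∧ t.2.2.1 < t.2.2.2 ∧
    w t.1 < w t.2.2.2 ∧ w t.2.2.2 < w t.2.2.1 ∧ w t.2.2.1 < w t.2.1}

/-- `w` avoids the pattern 1432. -/
def Avoids1432 (w : Equiv.Perm ℕ+) : Prop :=
  ¬ ∃ a b c d : ℕ+, a < b ∧ b < c ∧ c < d ∧ w a < w d ∧ w d < w c ∧ w c < w b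

/-- The Rothe diagram of `w`. -/
def RD (w : Equiv.Perm ℕ+) : Set (ℕ+ × ℕ+) :=
  {p | p.2 < w p.1 ∧ p.1 < w⁻¹ p.2}

/-- The Lehmer code of `w`: `code(w)_i = #{j > i : w(j) < w(i)}`. -/
noncomputable def lehmer (w : Equiv.Perm ℕ+) (i : ℕ+) : ℕ :=
  Set.ncard {j : ℕ+ | i < j ∧ w j < w i}

/-- The bottom pipe dream `B_w = {(i,j) : 1 ≤ j ≤ code(w)_i}` (as a set of cells). -/
def bottomSet (w : Equiv.Perm ℕ+) : Set (ℕ+ × ℕ+) :=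
  {p | (p.2 : ℕ) ≤ lehmer w p.1}

/-- The top pipe dream `T_w = {(i,j) : 1 ≤ i ≤ code(w⁻¹)_j}` (as a set of cells). -/
def topSet (w : Equiv.Perm ℕ+) : Set (ℕ+ × ℕ+) :=
  {p | (p.1 : ℕ) ≤ lehmer w⁻¹ p.2}

/-- `α(S)_m`: the number of cells of `S` on the diagonal `{(i,j) : i + j - 1 = m}`. -/
noncomputable def diagCount (S : Set (ℕ+ × ℕ+)) : ℕ+ → ℕ :=
  fun m => Set.ncard {p | p ∈ S ∧ p.1 + p.2 = m + 1}

/-- Ladder move of order `k` taking `D` to `D'`: writing `i = i₀ + k + 1` (so `i₀ = i - k - 1`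
and automatically `i ≥ k + 2`), it requires `(i,j) ∈ D`, `(i,j+1) ∉ D`, `(i₀,j) ∉ D`,
`(i₀,j+1) ∉ D`, and `(i',j), (i',j+1) ∈ D` for all `i - k ≤ i' < i`; it removes `(i,j)` and
adds `(i₀, j+1)`. -/
def LadderMove (k : ℕ) (D D' : Finset (ℕ+ × ℕ+)) : Prop :=
  ∃ i₀ j : ℕ+,
    (i₀ + k.succPNat, j) ∈ D ∧
    (i₀ + k.succPNat, j + 1) ∉ D ∧
    (i₀, j) ∉ D ∧
    (i₀, j + 1) ∉ D ∧
    (∀ i' : ℕ+, i₀ < i' → i' < i₀ + k.succPNat → (i', j) ∈ D ∧ (i', j + 1) ∈ D) ∧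
    D' = insert (i₀, j + 1) (D.erase (i₀ + k.succPNat, j))


lemma pnat_ncard_Iio (k : ℕ+) : (Set.Iio k).ncard = (k : ℕ) - 1 := by
  have h : Set.Iio k = ↑(Finset.Ico 1 k) := by
    ext x; simp [PNat.one_le]
  rw [h, Set.ncard_coe_finset, PNat.card_Ico, PNat.one_coe]

lemma pnat_iio_finite (k : ℕ+) : (Set.Iio k).Finite := by
  rw [show Set.Iio k = ↑(Finset.Ico 1 k) by ext x; simp [PNat.one_le]]
  exact Finset.finite_toSet _

lemma pnat_sub_one_add_one {a : ℕ+} (h : 1 < a) : a - 1 + 1 = a := by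
  apply PNat.coe_injective
  have h1 : ((a - 1 : ℕ+) : ℕ) = (a : ℕ) - 1 := by
    rw [PNat.sub_coe, if_pos h, PNat.one_coe]
  have h2 : (1:ℕ) < (a:ℕ) := h
  rw [PNat.add_coe, h1, PNat.one_coe]
  omega

lemma exists_pnat_bound (v : Equiv.Perm ℕ+) (hv : {x : ℕ+ | v x ≠ x}.Finite) :
    ∃ N : ℕ+, ∀ x, v x ≠ x → x ≤ N ∧ v x ≤ N := by
  refine ⟨(hv.toFinset ∪ hv.toFinset.image v).sup id, fun x hx => ⟨?_, ?_⟩⟩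
  · exact Finset.le_sup (f := id) (Finset.mem_union_left _ (hv.mem_toFinset.2 hx))
  · exact Finset.le_sup (f := id)
      (Finset.mem_union_right _ (Finset.mem_image_of_mem v (hv.mem_toFinset.2 hx)))

lemma inv_set_finite (v : Equiv.Perm ℕ+) (hv : {x : ℕ+ | v x ≠ x}.Finite) :
    {p : ℕ+ × ℕ+ | p.1 < p.2 ∧ v p.2 < v p.1}.Finite := by
  obtain ⟨N, hmem⟩ := exists_pnat_bound v hv
  apply Set.Finite.subset (Set.Finite.prod (Set.finite_Iic N) (Set.finite_Iic N))
  rintro ⟨p, q⟩ ⟨h1, h2⟩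
  by_cases hq : v q = q
  · have hp : v p ≠ p := by
      intro hp; rw [hp, hq] at h2; exact absurd h1 (not_lt.2 h2.le)
    obtain ⟨hp1, hp2⟩ := hmem p hp
    exact ⟨hp1, le_trans (le_of_lt (hq ▸ h2)) hp2⟩
  · obtain ⟨hq1, _⟩ := hmem q hq
    exact ⟨le_trans h1.le hq1, hq1⟩

lemma lehmer_set_sub (v : Equiv.Perm ℕ+) (i : ℕ+) :
    {j : ℕ+ | i < j ∧ v j < v i} ⊆ ⇑v.symm '' Set.Iio (v i) := by
  intro j hj
  exact ⟨v j, hj.2, v.symm_apply_apply j⟩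

lemma lehmer_set_finite (v : Equiv.Perm ℕ+) (i : ℕ+) :
    {j : ℕ+ | i < j ∧ v j < v i}.Finite :=
  Set.Finite.subset ((pnat_iio_finite (v i)).image v.symm) (lehmer_set_sub v i)

lemma strictMono_perm_eq_one (v : Equiv.Perm ℕ+) (h : StrictMono v) : v = 1 := by
  have le_ap : ∀ (f : Equiv.Perm ℕ+), StrictMono f → ∀ x, x ≤ f x := by
    intro f hf x
    induction x using PNat.strongInductionOn with
    | _ x ih =>
      by_contra hx
      push_neg at hx
      exact absurd (ih _ hx) (not_le.2 (hf hx))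
  have hsymm : StrictMono ⇑v.symm := by
    intro a b hab
    by_contra hc
    push_neg at hc
    rcases lt_or_eq_of_le hc with hc | hc
    · have := h hc
      rw [v.apply_symm_apply, v.apply_symm_apply] at this
      exact absurd hab (not_lt.2 this.le)
    · have : a = b := by
        have := congrArg v hc
        rwa [v.apply_symm_apply, v.apply_symm_apply, eq_comm] at this
      exact absurd this (ne_of_lt hab)
  ext x
  have h1 : x ≤ v x := le_ap v h x
  have h2 : x ≤ v.symm x := le_ap _ hsymm x
  have h3 : v x ≤ v (v.symm x) := h.monotone h2
  rw [v.apply_symm_apply] at h3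
  rw [Equiv.Perm.one_apply]
  exact (le_antisymm h1 h3).symm


lemma invNum_inv (w : Equiv.Perm ℕ+) : invNum w⁻¹ = invNum w := by
  unfold invNum
  have h : {p : ℕ+ × ℕ+ | p.1 < p.2 ∧ w⁻¹ p.2 < w⁻¹ p.1}
      = (fun p : ℕ+ × ℕ+ => (w p.2, w p.1)) '' {p : ℕ+ × ℕ+ | p.1 < p.2 ∧ w p.2 < w p.1} := by
    ext ⟨p, q⟩
    constructor
    · rintro ⟨h1, h2⟩
      exact ⟨(w⁻¹ q, w⁻¹ p), ⟨h2, by simpa using h1⟩, by simp⟩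
    · rintro ⟨⟨a, b⟩, ⟨h1, h2⟩, h3⟩
      simp only [Prod.mk.injEq] at h3
      obtain ⟨rfl, rfl⟩ := h3
      exact ⟨h2, by simpa using h1⟩
  rw [h]
  apply Set.ncard_image_of_injective
  intro p q h
  simp only [Prod.mk.injEq] at h
  exact Prod.ext (w.injective h.2) (w.injective h.1)

lemma cellKey_inj : Function.Injective cellKey := by
  intro p q h
  unfold cellKey at h
  have h1 : (p.1, OrderDual.toDual p.2) = (q.1, OrderDual.toDual q.2) := h
  simp only [Prod.mk.injEq] at h1
  exact Prod.ext h1.1 (by exact_mod_cast h1.2)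

lemma sort_max_append {α : Type*} [LinearOrder α] (s : Finset α) (a : α) (ha : a ∈ s)
    (hmax : ∀ b ∈ s, b ≤ a) :
    s.sort (· ≤ ·) = (s.erase a).sort (· ≤ ·) ++ [a] := by
  refine List.Perm.eq_of_sortedLE (Finset.pairwise_sort _ _).sortedLE ?_ ?_
  · rw [List.sortedLE_iff_pairwise, List.pairwise_append]
    refine ⟨Finset.pairwise_sort _ _, List.pairwise_singleton _ _, ?_⟩
    intro x hx b hb
    rw [List.mem_singleton] at hb
    subst hb
    exact hmax x (Finset.mem_of_mem_erase ((Finset.mem_sort _).1 hx))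
  · have p1 : (s.sort (· ≤ ·)).Perm s.toList := Finset.sort_perm_toList _ _
    have e1 : s.toList = (insert a (s.erase a)).toList := by rw [Finset.insert_erase ha]
    have p2 : ((insert a (s.erase a)).toList).Perm (a :: (s.erase a).toList) :=
      Finset.toList_insert (Finset.notMem_erase a s)
    have p3 : (a :: (s.erase a).toList).Perm (a :: (s.erase a).sort (· ≤ ·)) :=
      List.Perm.cons a (Finset.sort_perm_toList _ _).symm
    have p4 : (a :: (s.erase a).sort (· ≤ ·)).Perm ((s.erase a).sort (· ≤ ·) ++ [a]) :=
      (List.perm_append_singleton _ _).symm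
    exact ((((e1 ▸ p1).trans p2).trans p3).trans p4)

lemma pdWord_empty : pdWord ∅ = 1 := by
  simp [pdWord]

lemma pdWord_erase_max (D : Finset (ℕ+ × ℕ+)) (p : ℕ+ × ℕ+) (hp : p ∈ D)
    (hmax : ∀ q ∈ D, cellKey q ≤ cellKey p) :
    pdWord D = pdWord (D.erase p) * cellTrans p := by
  unfold pdWord
  have h1 : (D.erase p).image cellKey = (D.image cellKey).erase (cellKey p) :=
    Finset.image_erase cellKey_inj D p
  have h2 : (D.image cellKey).sort (· ≤ ·)
      = ((D.image cellKey).erase (cellKey p)).sort (· ≤ ·) ++ [cellKey p] := by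
    apply sort_max_append _ _ (Finset.mem_image_of_mem _ hp)
    intro b hb
    obtain ⟨q, hq, rfl⟩ := Finset.mem_image.1 hb
    exact hmax q hq
  rw [h2, h1, List.map_append, List.prod_append]
  rfl


lemma pnat_lt_succ_self (m : ℕ+) : m < m + 1 := by
  rw [← PNat.coe_lt_coe, PNat.add_coe, PNat.one_coe]; omega

lemma beside_left {m x : ℕ+} (h1 : x ≠ m) (h2 : x ≠ m + 1) : x < m ↔ x < m + 1 := by
  have e1 : (x:ℕ) ≠ (m:ℕ) := fun h => h1 (PNat.coe_injective h)
  have e2 : (x:ℕ) ≠ ((m+1:ℕ+):ℕ) := fun h => h2 (PNat.coe_injective h)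
  rw [PNat.add_coe, PNat.one_coe] at e2
  rw [← PNat.coe_lt_coe, ← PNat.coe_lt_coe, PNat.add_coe, PNat.one_coe]
  omega

lemma beside_right {m x : ℕ+} (h1 : x ≠ m) (h2 : x ≠ m + 1) : m < x ↔ m + 1 < x := by
  have e1 : (x:ℕ) ≠ (m:ℕ) := fun h => h1 (PNat.coe_injective h)
  have e2 : (x:ℕ) ≠ ((m+1:ℕ+):ℕ) := fun h => h2 (PNat.coe_injective h)
  rw [PNat.add_coe, PNat.one_coe] at e2
  rw [← PNat.coe_lt_coe, ← PNat.coe_lt_coe, PNat.add_coe, PNat.one_coe]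
  omega

lemma nonfix_inv (w : Equiv.Perm ℕ+) : {x : ℕ+ | w⁻¹ x ≠ x} = {x | w x ≠ x} := by
  ext x
  simp only [Set.mem_setOf_eq, ne_eq, Equiv.Perm.inv_eq_iff_eq]
  constructor
  · intro h hc; exact h (by rw [hc])
  · intro h hc; exact h (by rw [← hc])

lemma lehmer_lt_coe (v : Equiv.Perm ℕ+) (j : ℕ+) : lehmer v j < (v j : ℕ) := by
  unfold lehmer
  have h := Set.ncard_le_ncard (lehmer_set_sub v j) ((pnat_iio_finite (v j)).image _)
  rw [Set.ncard_image_of_injective _ v.symm.injective, pnat_ncard_Iio] at h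
  have h2 := (v j).pos
  refine lt_of_le_of_lt h ?_
  omega

lemma fixed_of_gt (v : Equiv.Perm ℕ+) (N : ℕ+) (hN : ∀ x, v x ≠ x → x ≤ N ∧ v x ≤ N)
    {x : ℕ+} (hx : N < x) : v x = x := by
  by_contra h
  exact absurd (hN x h).1 (not_le.2 hx)

lemma lehmer_eq_zero (v : Equiv.Perm ℕ+) (N : ℕ+) (hN : ∀ x, v x ≠ x → x ≤ N ∧ v x ≤ N)
    {j : ℕ+} (hj : N < j) : lehmer v j = 0 := by
  unfold lehmer
  have h : {j' : ℕ+ | j < j' ∧ v j' < v j} = ∅ := by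
    ext j'
    simp only [Set.mem_setOf_eq, Set.mem_empty_iff_false, iff_false, not_and, not_lt]
    intro h1
    rw [fixed_of_gt v N hN hj, fixed_of_gt v N hN (hj.trans h1)]
    exact h1.le
  rw [h, Set.ncard_empty]

lemma apply_le_bound (v : Equiv.Perm ℕ+) (N : ℕ+) (hN : ∀ x, v x ≠ x → x ≤ N ∧ v x ≤ N)
    {j : ℕ+} (hj : j ≤ N) : v j ≤ N := by
  by_cases h : v j = j
  · rw [h]; exact hj
  · exact (hN j h).2

lemma topSet_finite (w : Equiv.Perm ℕ+) (hw : {x : ℕ+ | w x ≠ x}.Finite) :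
    (topSet w).Finite := by
  obtain ⟨N, hN⟩ := exists_pnat_bound w⁻¹ ((nonfix_inv w) ▸ hw)
  apply Set.Finite.subset (Set.Finite.prod (Set.finite_Iic N) (Set.finite_Iic N))
  rintro ⟨i, j⟩ hij
  replace hij : (i:ℕ) ≤ lehmer w⁻¹ j := hij
  have hj : j ≤ N := by
    by_contra h
    push_neg at h
    rw [lehmer_eq_zero _ N hN h] at hij
    exact absurd hij (by have := i.pos; omega)
  have h2 : (i:ℕ) < ((w⁻¹ j : ℕ+) : ℕ) := lt_of_le_of_lt hij (lehmer_lt_coe _ j)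
  exact ⟨le_trans (le_of_lt ((PNat.coe_lt_coe _ _).1 h2)) (apply_le_bound _ N hN hj), hj⟩


lemma step_lemma (w : Equiv.Perm ℕ+) (hw : {x : ℕ+ | w x ≠ x}.Finite) (hw1 : w ≠ 1) :
    ∃ (w' : Equiv.Perm ℕ+) (p₀ : ℕ+ × ℕ+),
      {x : ℕ+ | w' x ≠ x}.Finite ∧
      invNum w' + 1 = invNum w ∧
      w' * cellTrans p₀ = w ∧
      p₀ ∈ topSet w ∧
      topSet w' = topSet w \ {p₀} ∧
      (∀ q ∈ topSet w, cellKey q ≤ cellKey p₀) := by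
  set v := w⁻¹ with hv_def
  have hv : {x : ℕ+ | v x ≠ x}.Finite := (nonfix_inv w) ▸ hw
  obtain ⟨N, hN⟩ := exists_pnat_bound v hv
  have hc0 : ∀ j : ℕ+, N < j → lehmer v j = 0 := fun j hj => lehmer_eq_zero v N hN hj
  set M : ℕ := (Finset.Iic N).sup (fun j => lehmer v j) with hM_def
  have hcM : ∀ j, lehmer v j ≤ M := by
    intro j
    by_cases hj : j ≤ N
    · exact Finset.le_sup (f := fun j => lehmer v j) (Finset.mem_Iic.2 hj)
    · push_neg at hj; rw [hc0 j hj]; exact Nat.zero_le _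
  have hv1 : v ≠ 1 := by
    intro h
    apply hw1
    have h2 := congrArg Inv.inv h
    rw [hv_def] at h2
    simpa using h2
  have hexinv : ∃ p q : ℕ+, p < q ∧ v q < v p := by
    by_contra h
    push_neg at h
    apply hv1
    apply strictMono_perm_eq_one
    intro p q hpq
    exact lt_of_le_of_ne (h p q hpq) fun he => (ne_of_lt hpq) (v.injective he)
  have hM1 : 1 ≤ M := by
    obtain ⟨p, q, hpq, hlt⟩ := hexinv
    have h1 : 0 < lehmer v p := (Set.ncard_pos (lehmer_set_finite v p)).2 ⟨q, hpq, hlt⟩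
    have h2 := hcM p
    omega
  have hJne : ((Finset.Iic N).filter (fun j => lehmer v j = M)).Nonempty := by
    obtain ⟨j₁, hj₁, hj₁M⟩ :=
      Finset.exists_mem_eq_sup (Finset.Iic N) ⟨N, Finset.mem_Iic.2 le_rfl⟩ (fun j => lehmer v j)
    exact ⟨j₁, Finset.mem_filter.2 ⟨hj₁, hj₁M.symm⟩⟩
  set j₀ : ℕ+ := (((Finset.Iic N).filter (fun j => lehmer v j = M))).min' hJne with hj₀_def
  have hj₀M : lehmer v j₀ = M := (Finset.mem_filter.1 (Finset.min'_mem _ hJne)).2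
  have hj₀min : ∀ j, lehmer v j = M → j₀ ≤ j := by
    intro j hj
    apply Finset.min'_le
    refine Finset.mem_filter.2 ⟨Finset.mem_Iic.2 ?_, hj⟩
    by_contra h
    push_neg at h
    rw [hc0 j h] at hj
    omega
  set Mp : ℕ+ := ⟨M, hM1⟩ with hMp_def
  have hMpcoe : (Mp : ℕ) = M := rfl
  set m : ℕ+ := Mp + j₀ - 1 with hm_def
  have hm : m + 1 = Mp + j₀ := by
    apply pnat_sub_one_add_one
    rw [← PNat.coe_lt_coe, PNat.add_coe, PNat.one_coe]
    have := j₀.pos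
    have : (Mp : ℕ) = M := rfl
    omega
  -- C1 : everything left of j₀ has smaller v-value
  have hC1 : ∀ j, j < j₀ → v j < v j₀ := by
    intro j hj
    by_contra hcon
    push_neg at hcon
    have hne : v j₀ ≠ v j := fun he => (ne_of_lt hj) (v.injective he).symm
    have hlt : v j₀ < v j := lt_of_le_of_ne hcon hne
    have hsub : insert j₀ {j' : ℕ+ | j₀ < j' ∧ v j' < v j₀}
        ⊆ {j' : ℕ+ | j < j' ∧ v j' < v j} := by
      intro x hx
      rcases Set.mem_insert_iff.1 hx with rfl | ⟨h1, h2⟩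
      · exact ⟨hj, hlt⟩
      · exact ⟨hj.trans h1, h2.trans hlt⟩
    have h1 : (insert j₀ {j' : ℕ+ | j₀ < j' ∧ v j' < v j₀}).ncard = M + 1 := by
      rw [Set.ncard_insert_of_notMem (fun h => lt_irrefl j₀ h.1) (lehmer_set_finite v j₀)]
      rw [show {j' : ℕ+ | j₀ < j' ∧ v j' < v j₀}.ncard = lehmer v j₀ from rfl, hj₀M]
    have h2 : M + 1 ≤ lehmer v j := by
      rw [← h1]
      exact Set.ncard_le_ncard hsub (lehmer_set_finite v j)
    have := hcM j
    omega
  -- C2 : the value at j₀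
  have hC2 : ((v j₀ : ℕ+) : ℕ) = M + (j₀ : ℕ) := by
    have hBeq : {j : ℕ+ | v j < v j₀} = Set.Iio j₀ ∪ {j' : ℕ+ | j₀ < j' ∧ v j' < v j₀} := by
      ext j
      simp only [Set.mem_setOf_eq, Set.mem_union, Set.mem_Iio]
      constructor
      · intro h
        rcases lt_trichotomy j j₀ with h1 | rfl | h1
        · exact Or.inl h1
        · exact absurd h (lt_irrefl _)
        · exact Or.inr ⟨h1, h⟩
      · rintro (h | ⟨h1, h2⟩)
        · exact hC1 j h
        · exact h2
    have hBpre : {j : ℕ+ | v j < v j₀} = ⇑v.symm '' Set.Iio (v j₀) := by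
      ext j
      simp only [Set.mem_setOf_eq, Set.mem_image, Set.mem_Iio]
      constructor
      · intro h; exact ⟨v j, h, v.symm_apply_apply j⟩
      · rintro ⟨y, hy, rfl⟩; rwa [v.apply_symm_apply]
    have h1 : {j : ℕ+ | v j < v j₀}.ncard = ((v j₀ : ℕ+):ℕ) - 1 := by
      rw [hBpre, Set.ncard_image_of_injective _ v.symm.injective, pnat_ncard_Iio]
    have hdisj : Disjoint (Set.Iio j₀) {j' : ℕ+ | j₀ < j' ∧ v j' < v j₀} := by
      rw [Set.disjoint_left]
      rintro x hx ⟨hx1, _⟩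
      exact absurd (hx.trans hx1) (lt_irrefl x)
    have h2 : {j : ℕ+ | v j < v j₀}.ncard = ((j₀:ℕ) - 1) + M := by
      rw [hBeq, Set.ncard_union_eq hdisj (pnat_iio_finite j₀) (lehmer_set_finite v j₀),
        pnat_ncard_Iio, show {j' : ℕ+ | j₀ < j' ∧ v j' < v j₀}.ncard = lehmer v j₀ from rfl,
        hj₀M]
    have hp1 := (v j₀).pos
    have hp2 := j₀.pos
    omega
  have hvj₀ : v j₀ = m + 1 := by
    apply PNat.coe_injective
    rw [show ((m + 1 : ℕ+) : ℕ) = (m:ℕ) + 1 by rw [PNat.add_coe, PNat.one_coe], hC2]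
    have hmc := congrArg (fun x : ℕ+ => (x:ℕ)) hm
    simp only [PNat.add_coe, PNat.one_coe] at hmc
    have : (Mp : ℕ) = M := rfl
    omega
  set a : ℕ+ := v.symm m with ha_def
  have hva : v a = m := v.apply_symm_apply m
  have hmlt : m < m + 1 := pnat_lt_succ_self m
  have haj₀ : a ≠ j₀ := by
    intro h
    rw [h, hvj₀] at hva
    exact (ne_of_lt hmlt) hva.symm
  have hC3 : j₀ < a := by
    by_contra h
    push_neg at h
    have hlt : a < j₀ := lt_of_le_of_ne h haj₀
    have hsub : {j' : ℕ+ | j₀ < j' ∧ v j' < v j₀} ⊆ {j' : ℕ+ | a < j' ∧ v j' < v a} := by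
      rintro x ⟨h1, h2⟩
      refine ⟨hlt.trans h1, ?_⟩
      rw [hva]
      rw [hvj₀] at h2
      have hxa : x ≠ a := (hlt.trans h1).ne'
      have hxm : v x ≠ m := fun he => hxa (by rw [← hva] at he; exact v.injective he)
      have hxm1 : v x ≠ m + 1 := ne_of_lt h2
      exact (beside_left hxm hxm1).2 h2
    have h1 : M ≤ lehmer v a := by
      rw [← hj₀M]
      exact Set.ncard_le_ncard hsub (lehmer_set_finite v a)
    have h2 : lehmer v a = M := le_antisymm (hcM a) h1
    exact absurd (hj₀min a h2) (not_le.2 hlt)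
  -- the swap and the new permutations
  set sw : Equiv.Perm ℕ+ := Equiv.swap m (m + 1) with hsw_def
  set u : Equiv.Perm ℕ+ := sw * v with hu_def
  have hu_apply : ∀ x, u x = sw (v x) := fun x => rfl
  have hswm : sw m = m + 1 := Equiv.swap_apply_left _ _
  have hswm1 : sw (m + 1) = m := Equiv.swap_apply_right _ _
  have hswo : ∀ x, x ≠ m → x ≠ m + 1 → sw x = x :=
    fun x h1 h2 => Equiv.swap_apply_of_ne_of_ne h1 h2
  have hvne_m : ∀ j, j ≠ a → v j ≠ m :=
    fun j hj he => hj (by rw [← hva] at he; exact v.injective he)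
  have hvne_m1 : ∀ j, j ≠ j₀ → v j ≠ m + 1 :=
    fun j hj he => hj (by rw [← hvj₀] at he; exact v.injective he)
  have huj : ∀ j, j ≠ j₀ → j ≠ a → u j = v j := by
    intro j h1 h2
    rw [hu_apply, hswo _ (hvne_m j h2) (hvne_m1 j h1)]
  have huj₀ : u j₀ = m := by rw [hu_apply, hvj₀, hswm1]
  have hua : u a = m + 1 := by rw [hu_apply, hva, hswm]
  -- lehmer codes of u
  have hset_a : {j' : ℕ+ | a < j' ∧ u j' < u a} = {j' : ℕ+ | a < j' ∧ v j' < v a} := by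
    ext x
    simp only [Set.mem_setOf_eq, and_congr_right_iff]
    intro hx
    have hxa : x ≠ a := hx.ne'
    have hxj₀ : x ≠ j₀ := (hC3.trans hx).ne'
    rw [huj x hxj₀ hxa, hua, hva]
    exact (beside_left (hvne_m x hxa) (hvne_m1 x hxj₀)).symm
  have hcu : ∀ j, j ≠ j₀ → lehmer u j = lehmer v j := by
    intro j hj
    by_cases hja : j = a
    · subst hja
      show {j' : ℕ+ | a < j' ∧ u j' < u a}.ncard = _
      rw [hset_a]
      rfl
    · have hvj_m : v j ≠ m := hvne_m j hja
      have hvj_m1 : v j ≠ m + 1 := hvne_m1 j hj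
      have hseteq : {j' : ℕ+ | j < j' ∧ u j' < u j} = {j' : ℕ+ | j < j' ∧ v j' < v j} := by
        ext x
        simp only [Set.mem_setOf_eq, and_congr_right_iff]
        intro hx
        rw [huj j hj hja]
        by_cases hx₀ : x = j₀
        · subst hx₀
          rw [huj₀, hvj₀]
          exact beside_right hvj_m hvj_m1
        · by_cases hxa : x = a
          · subst hxa
            rw [hua, hva]
            exact (beside_right hvj_m hvj_m1).symm
          · rw [huj x hx₀ hxa]
      show {j' : ℕ+ | j < j' ∧ u j' < u j}.ncard = _
      rw [hseteq]
      rfl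
  have ha_mem : a ∈ {j' : ℕ+ | j₀ < j' ∧ v j' < v j₀} := by
    refine ⟨hC3, ?_⟩
    rw [hva, hvj₀]
    exact hmlt
  have hcuj₀ : lehmer u j₀ = M - 1 := by
    have hseteq : {j' : ℕ+ | j₀ < j' ∧ u j' < u j₀}
        = {j' : ℕ+ | j₀ < j' ∧ v j' < v j₀} \ {a} := by
      ext x
      simp only [Set.mem_setOf_eq, Set.mem_diff, Set.mem_singleton_iff]
      constructor
      · rintro ⟨h1, h2⟩
        have hxa : x ≠ a := by
          intro he; subst he
          rw [hua, huj₀] at h2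
          exact absurd h2 (not_lt.2 hmlt.le)
        have hxj₀ : x ≠ j₀ := h1.ne'
        rw [huj x hxj₀ hxa, huj₀] at h2
        refine ⟨⟨h1, ?_⟩, hxa⟩
        rw [hvj₀]
        exact (beside_left (hvne_m x hxa) (hvne_m1 x hxj₀)).1 h2
      · rintro ⟨⟨h1, h2⟩, hxa⟩
        have hxj₀ : x ≠ j₀ := h1.ne'
        refine ⟨h1, ?_⟩
        rw [huj x hxj₀ hxa, huj₀]
        rw [hvj₀] at h2
        exact (beside_left (hvne_m x hxa) (hvne_m1 x hxj₀)).2 h2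
    show {j' : ℕ+ | j₀ < j' ∧ u j' < u j₀}.ncard = M - 1
    rw [hseteq, Set.ncard_sdiff_singleton_of_mem ha_mem]
    rw [show {j' : ℕ+ | j₀ < j' ∧ v j' < v j₀}.ncard = lehmer v j₀ from rfl, hj₀M]
  -- inversion sets of u and v
  have key : ∀ p q : ℕ+, p < q → (u q < u p ↔ (v q < v p ∧ ¬(p = j₀ ∧ q = a))) := by
    intro p q hpq
    by_cases hpj : p = j₀
    · subst hpj
      by_cases hqa : q = a
      · subst hqa
        rw [huj₀, hua, hvj₀, hva]
        constructor
        · intro h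
          exact absurd h (not_lt.2 hmlt.le)
        · rintro ⟨_, h2⟩
          exact absurd ⟨rfl, rfl⟩ h2
      · have hqj₀ : q ≠ j₀ := hpq.ne'
        rw [huj q hqj₀ hqa, huj₀, hvj₀]
        constructor
        · intro h
          exact ⟨(beside_left (hvne_m q hqa) (hvne_m1 q hqj₀)).1 h, fun hc => hqa hc.2⟩
        · rintro ⟨h1, _⟩
          exact (beside_left (hvne_m q hqa) (hvne_m1 q hqj₀)).2 h1
    · by_cases hpa : p = a
      · subst hpa
        have hqa : q ≠ a := hpq.ne'
        have hqj₀ : q ≠ j₀ := (hC3.trans hpq).ne'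
        rw [huj q hqj₀ hqa, hua, hva]
        constructor
        · intro h
          exact ⟨(beside_left (hvne_m q hqa) (hvne_m1 q hqj₀)).2 h, fun hc => haj₀ hc.1⟩
        · rintro ⟨h1, _⟩
          exact (beside_left (hvne_m q hqa) (hvne_m1 q hqj₀)).1 h1
      · rw [huj p hpj hpa]
        by_cases hqj : q = j₀
        · subst hqj
          rw [huj₀, hvj₀]
          constructor
          · intro h
            exact ⟨(beside_right (hvne_m p hpa) (hvne_m1 p hpj)).1 h, fun hc => hpj hc.1⟩
          · rintro ⟨h1, _⟩
            exact (beside_right (hvne_m p hpa) (hvne_m1 p hpj)).2 h1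
        · by_cases hqa : q = a
          · subst hqa
            rw [hua, hva]
            constructor
            · intro h
              exact ⟨(beside_right (hvne_m p hpa) (hvne_m1 p hpj)).2 h, fun hc => hpj hc.1⟩
            · rintro ⟨h1, _⟩
              exact (beside_right (hvne_m p hpa) (hvne_m1 p hpj)).1 h1
          · rw [huj q hqj hqa]
            exact ⟨fun h => ⟨h, fun hc => hpj hc.1⟩, fun h => h.1⟩
  have hInvEq : {p : ℕ+ × ℕ+ | p.1 < p.2 ∧ u p.2 < u p.1}
      = {p : ℕ+ × ℕ+ | p.1 < p.2 ∧ v p.2 < v p.1} \ {(j₀, a)} := by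
    ext ⟨p, q⟩
    simp only [Set.mem_setOf_eq, Set.mem_diff, Set.mem_singleton_iff, Prod.mk.injEq]
    constructor
    · rintro ⟨h1, h2⟩
      obtain ⟨h3, h4⟩ := (key p q h1).1 h2
      exact ⟨⟨h1, h3⟩, h4⟩
    · rintro ⟨⟨h1, h2⟩, h3⟩
      exact ⟨h1, (key p q h1).2 ⟨h2, h3⟩⟩
  have hinvfin := inv_set_finite v hv
  have hmem_inv : (j₀, a) ∈ {p : ℕ+ × ℕ+ | p.1 < p.2 ∧ v p.2 < v p.1} := by
    refine ⟨hC3, ?_⟩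
    show v a < v j₀
    rw [hva, hvj₀]
    exact hmlt
  have hinv_v_pos : 1 ≤ invNum v := by
    have h1 : 0 < invNum v := (Set.ncard_pos hinvfin).2 ⟨_, hmem_inv⟩
    omega
  have hinvu : invNum u = invNum v - 1 := by
    show Set.ncard _ = _
    rw [hInvEq, Set.ncard_sdiff_singleton_of_mem hmem_inv]
    rfl
  -- assemble
  set w' : Equiv.Perm ℕ+ := w * sw with hw'_def
  have hw'inv : w'⁻¹ = u := by
    rw [hw'_def, mul_inv_rev, hu_def, hsw_def, Equiv.swap_inv, hv_def]
  have hcell : cellTrans (Mp, j₀) = sw := by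
    rw [hsw_def]
    show Equiv.swap (Mp + j₀ - 1) (Mp + j₀) = Equiv.swap m (m + 1)
    rw [← hm_def, ← hm]
  have hmul : w' * cellTrans (Mp, j₀) = w := by
    rw [hcell, hw'_def, mul_assoc, hsw_def, Equiv.swap_mul_self, mul_one]
  have hinvw' : invNum w' + 1 = invNum w := by
    have h1 : invNum w' = invNum u := by rw [← hw'inv, invNum_inv]
    have h2 : invNum w = invNum v := by rw [hv_def, invNum_inv]
    rw [h1, h2, hinvu]
    omega
  have hp₀ : (Mp, j₀) ∈ topSet w := by
    show ((Mp : ℕ+) : ℕ) ≤ lehmer w⁻¹ j₀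
    rw [← hv_def, hj₀M, hMpcoe]
  have htop : topSet w' = topSet w \ {(Mp, j₀)} := by
    ext ⟨i, j⟩
    simp only [topSet, Set.mem_setOf_eq, Set.mem_diff, Set.mem_singleton_iff, Prod.mk.injEq,
      hw'inv, ← hv_def]
    by_cases hj : j = j₀
    · subst hj
      rw [hcuj₀, hj₀M]
      have hi := i.pos
      constructor
      · intro h
        refine ⟨by omega, fun hc => ?_⟩
        have h2 : (i : ℕ) = M := by rw [hc.1, hMpcoe]
        omega
      · rintro ⟨h1, h2⟩
        have hiMp : i ≠ Mp := fun he => h2 ⟨he, rfl⟩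
        have h3 : (i : ℕ) ≠ M := fun he => hiMp (PNat.coe_injective (by rw [he, hMpcoe]))
        omega
    · rw [hcu j hj]
      constructor
      · intro h
        exact ⟨h, fun hc => hj hc.2⟩
      · rintro ⟨h1, _⟩
        exact h1
  have hmax : ∀ q ∈ topSet w, cellKey q ≤ cellKey (Mp, j₀) := by
    rintro ⟨i, j⟩ hq
    replace hq : (i : ℕ) ≤ lehmer w⁻¹ j := hq
    rw [← hv_def] at hq
    show toLex (i, OrderDual.toDual j) ≤ toLex (Mp, OrderDual.toDual j₀)
    rw [Prod.Lex.le_iff]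
    have hcMj := hcM j
    by_cases hiM : (i : ℕ) < M
    · left
      show i < Mp
      rw [← PNat.coe_lt_coe, hMpcoe]
      exact hiM
    · right
      have hieq : (i : ℕ) = M := by omega
      have hcjM : lehmer v j = M := by omega
      refine ⟨PNat.coe_injective (by show (i:ℕ) = (Mp:ℕ); rw [hieq, hMpcoe]), ?_⟩
      show OrderDual.toDual j ≤ OrderDual.toDual j₀
      exact OrderDual.toDual_le_toDual.2 (hj₀min j hcjM)
  have hw'fin : {x : ℕ+ | w' x ≠ x}.Finite := by
    apply Set.Finite.subset (hw.union ((Set.finite_singleton (m + 1)).insert m))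
    intro x hx
    simp only [Set.mem_setOf_eq] at hx
    by_cases hxm : x = m
    · exact Or.inr (Or.inl hxm)
    · by_cases hxm1 : x = m + 1
      · exact Or.inr (Or.inr hxm1)
      · left
        show w x ≠ x
        intro hc
        apply hx
        show w (sw x) = x
        rw [hswo x hxm hxm1, hc]
  exact ⟨w', (Mp, j₀), hw'fin, hinvw', hmul, hp₀, htop, hmax⟩

/-- the top pipe dream `T_w` is a pipe dream of `w`. -/
theorem top_is_pipe_dream (w : Equiv.Perm ℕ+)
    (hw : {x : ℕ+ | w x ≠ x}.Finite) :
    ∃ T : Finset (ℕ+ × ℕ+), (↑T : Set (ℕ+ × ℕ+)) = topSet w ∧ IsPipeDream w T := by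
  suffices h : ∀ n (w : Equiv.Perm ℕ+), {x : ℕ+ | w x ≠ x}.Finite → invNum w = n →
      ∃ T : Finset (ℕ+ × ℕ+), (↑T : Set (ℕ+ × ℕ+)) = topSet w ∧ IsPipeDream w T by
    exact h (invNum w) w hw rfl
  intro n
  induction n using Nat.strong_induction_on with
  | _ n ih =>
    intro w hw hn
    by_cases hw1 : w = 1
    · subst hw1
      have htop1 : topSet (1 : Equiv.Perm ℕ+) = ∅ := by
        ext ⟨i, j⟩
        simp only [topSet, Set.mem_setOf_eq, Set.mem_empty_iff_false, iff_false, not_le]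
        have h0 : lehmer (1 : Equiv.Perm ℕ+)⁻¹ j = 0 := by
          unfold lehmer
          have he : {j' : ℕ+ | j < j' ∧ (1 : Equiv.Perm ℕ+)⁻¹ j' < (1 : Equiv.Perm ℕ+)⁻¹ j}
              = ∅ := by
            ext x
            simp only [inv_one, Equiv.Perm.one_apply, Set.mem_setOf_eq,
              Set.mem_empty_iff_false, iff_false, not_and, not_lt]
            exact fun h => h.le
          rw [he, Set.ncard_empty]
        rw [h0]
        exact i.pos
      have hinv1 : invNum (1 : Equiv.Perm ℕ+) = 0 := by
        unfold invNum
        have he : {p : ℕ+ × ℕ+ | p.1 < p.2 ∧ (1 : Equiv.Perm ℕ+) p.2 < (1 : Equiv.Perm ℕ+) p.1}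
            = ∅ := by
          ext ⟨p, q⟩
          simp only [Equiv.Perm.one_apply, Set.mem_setOf_eq, Set.mem_empty_iff_false,
            iff_false, not_and, not_lt]
          exact fun h => h.le
        rw [he, Set.ncard_empty]
      refine ⟨∅, by rw [htop1, Finset.coe_empty], ?_, pdWord_empty⟩
      rw [hinv1, Finset.card_empty]
    · obtain ⟨w', p₀, hw'fin, hinv, hmul, hp₀, htop, hmax⟩ := step_lemma w hw hw1
      have hn' : invNum w' < n := by omega
      obtain ⟨T'', hT''co, hpd⟩ := ih _ hn' w' hw'fin rfl
      set T : Finset (ℕ+ × ℕ+) := (topSet_finite w hw).toFinset with hT_def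
      have hTco : (↑T : Set (ℕ+ × ℕ+)) = topSet w := Set.Finite.coe_toFinset _
      have hp₀T : p₀ ∈ T := by
        rw [← Finset.mem_coe, hTco]
        exact hp₀
      have herase : (↑(T.erase p₀) : Set (ℕ+ × ℕ+)) = topSet w' := by
        rw [Finset.coe_erase, hTco, htop]
      have hT'' : T'' = T.erase p₀ := Finset.coe_injective (hT''co.trans herase.symm)
      refine ⟨T, hTco, ?_, ?_⟩
      · have h1 : (T.erase p₀).card = invNum w' := by
          rw [← hT'']
          exact hpd.1
        have h2 := Finset.card_erase_add_one hp₀T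
        omega
      · have h3 := pdWord_erase_max T p₀ hp₀T
          (fun q hq => hmax q (by rw [← hTco]; exact Finset.mem_coe.2 hq))
        have h4 : pdWord (T.erase p₀) = w' := by
          rw [← hT'']
          exact hpd.2
        rw [h3, h4, hmul]
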